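/- Let (Ω, μ) be a probability space, n ≥ 1, and let X₁, …, X_{2n} : Ω → Matrix p q ℂ be independent, Bochner-integrable matrix-valued random variables each with expectation 𝔼[X_t] = R. Then 𝔼[trace(X₁ X₂ᴴ X₃ X₄ᴴ ⋯ X_{2n−1} X_{2n}ᴴ)] = trace((R Rᴴ)^n). In other words, the product estimator built from 2n independent unbiased snapshots of R is an unbiased estimator of the 2n-th moment M_{2n} = trace((R Rᴴ)^n). -/

import Mathlib

open Matrix MeasureTheory ProbabilityTheory
open scoped ComplexConjugate

noncomputable instance matrixMeasurableSpace {p q : Type*} :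
    MeasurableSpace (Matrix p q ℂ) :=
  inferInstanceAs (MeasurableSpace (p → q → ℂ))

section Aux

variable {Ω : Type*} [MeasurableSpace Ω] {μ : Measure Ω}

lemma measurable_matrix_entry {p q : Type*} (i : p) (j : q) :
    Measurable fun M : Matrix p q ℂ => M i j :=
  (measurable_pi_apply j).comp (measurable_pi_apply i)

lemma integrable_conj_of_integrable {f : Ω → ℂ} (hf : Integrable f μ) :
    Integrable (fun ω => conj (f ω)) μ := by
  have := ((RCLike.conjCLE (K := ℂ)).toContinuousLinearMap).integrable_comp hf
  simpa [Function.comp, RCLike.conjCLE_apply] using this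

lemma indep_integral_mul_complex {f g : Ω → ℂ} (h : IndepFun f g μ)
    (hf : Integrable f μ) (hg : Integrable g μ) :
    ∫ ω, f ω * g ω ∂μ = (∫ ω, f ω ∂μ) * ∫ ω, g ω ∂μ := by
  have hfg : Integrable (fun ω => f ω * g ω) μ := h.integrable_mul hf hg
  have hfr : Integrable (fun ω => (f ω).re) μ := hf.re
  have hfi : Integrable (fun ω => (f ω).im) μ := hf.im
  have hgr : Integrable (fun ω => (g ω).re) μ := hg.re
  have hgi : Integrable (fun ω => (g ω).im) μ := hg.im
  have hrr : IndepFun (fun ω => (f ω).re) (fun ω => (g ω).re) μ :=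
    h.comp Complex.measurable_re Complex.measurable_re
  have hri : IndepFun (fun ω => (f ω).re) (fun ω => (g ω).im) μ :=
    h.comp Complex.measurable_re Complex.measurable_im
  have hir : IndepFun (fun ω => (f ω).im) (fun ω => (g ω).re) μ :=
    h.comp Complex.measurable_im Complex.measurable_re
  have hii : IndepFun (fun ω => (f ω).im) (fun ω => (g ω).im) μ :=
    h.comp Complex.measurable_im Complex.measurable_im
  have irr : ∫ ω, (f ω).re * (g ω).re ∂μ = (∫ ω, (f ω).re ∂μ) * ∫ ω, (g ω).re ∂μ :=
    hrr.integral_fun_mul_eq_mul_integral hfr.aestronglyMeasurable hgr.aestronglyMeasurable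
  have iri : ∫ ω, (f ω).re * (g ω).im ∂μ = (∫ ω, (f ω).re ∂μ) * ∫ ω, (g ω).im ∂μ :=
    hri.integral_fun_mul_eq_mul_integral hfr.aestronglyMeasurable hgi.aestronglyMeasurable
  have iir : ∫ ω, (f ω).im * (g ω).re ∂μ = (∫ ω, (f ω).im ∂μ) * ∫ ω, (g ω).re ∂μ :=
    hir.integral_fun_mul_eq_mul_integral hfi.aestronglyMeasurable hgr.aestronglyMeasurable
  have iii : ∫ ω, (f ω).im * (g ω).im ∂μ = (∫ ω, (f ω).im ∂μ) * ∫ ω, (g ω).im ∂μ :=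
    hii.integral_fun_mul_eq_mul_integral hfi.aestronglyMeasurable hgi.aestronglyMeasurable
  have Irr : Integrable (fun ω => (f ω).re * (g ω).re) μ := hrr.integrable_mul hfr hgr
  have Iri : Integrable (fun ω => (f ω).re * (g ω).im) μ := hri.integrable_mul hfr hgi
  have Iir : Integrable (fun ω => (f ω).im * (g ω).re) μ := hir.integrable_mul hfi hgr
  have Iii : Integrable (fun ω => (f ω).im * (g ω).im) μ := hii.integrable_mul hfi hgi
  have e1 : ∀ (F : Ω → ℂ), Integrable F μ → (∫ ω, F ω ∂μ).re = ∫ ω, (F ω).re ∂μ := by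
    intro F hF
    simpa using (integral_re (𝕜 := ℂ) hF).symm
  have e2 : ∀ (F : Ω → ℂ), Integrable F μ → (∫ ω, F ω ∂μ).im = ∫ ω, (F ω).im ∂μ := by
    intro F hF
    simpa using (integral_im (𝕜 := ℂ) hF).symm
  apply Complex.ext
  · rw [e1 _ hfg, Complex.mul_re, e1 _ hf, e1 _ hg, e2 _ hf, e2 _ hg]
    simp_rw [Complex.mul_re]
    rw [integral_sub Irr Iii, irr, iii]
  · rw [e2 _ hfg, Complex.mul_im, e1 _ hf, e1 _ hg, e2 _ hf, e2 _ hg]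
    simp_rw [Complex.mul_im]
    rw [integral_add Iri Iir, iri, iir]

lemma measurable_list_prod_entry {α p : Type*} [MeasurableSpace α] [Fintype p] [DecidableEq p]
    (L : List (α → Matrix p p ℂ)) :
    (∀ F ∈ L, ∀ (i j : p), Measurable fun x => F x i j) → ∀ (i j : p),
    Measurable fun x => ((L.map fun (F : α → Matrix p p ℂ) => F x).prod) i j := by
  induction L with
  | nil =>
    intro _ i j
    simp only [List.map_nil, List.prod_nil]
    exact measurable_const
  | cons F L ih =>
    intro hL i j
    simp only [List.map_cons, List.prod_cons, Matrix.mul_apply]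
    apply Finset.measurable_sum
    intro k _
    exact (hL F (by simp) i k).mul
      (ih (fun G hG i' j' => hL G (by simp [hG]) i' j') k j)

end Aux

/-- Given `2n` independent, integrable matrix-valued random variables `X₀, …, X_{2n−1}`
each with (entrywise) expectation `R`, the product estimator
`trace(X₀ X₁ᴴ X₂ X₃ᴴ ⋯ X_{2n−2} X_{2n−1}ᴴ)` is an unbiased estimator of the
`2n`-th moment `M_{2n} = trace((R Rᴴ)^n)`. -/
theorem unbiased_moment_estimator {Ω : Type*} [MeasurableSpace Ω]
    (μ : Measure Ω) [IsProbabilityMeasure μ]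
    {p q : Type*} [Fintype p] [Fintype q] [DecidableEq p]
    (n : ℕ) (hn : 1 ≤ n)
    (X : ℕ → Ω → Matrix p q ℂ) (R : Matrix p q ℂ)
    (hmeas : ∀ t, Measurable (X t))
    (hindep : iIndepFun (m := fun _ : Fin (2 * n) => inferInstance)
      (fun t : Fin (2 * n) => X (t : ℕ)) μ)
    (hint : ∀ t, t < 2 * n → ∀ i j, Integrable (fun ω => X t ω i j) μ)
    (hexp : ∀ t, t < 2 * n → ∀ i j, ∫ ω, X t ω i j ∂μ = R i j) :
    ∫ ω, Matrix.trace
        (((List.range n).map fun k => X (2 * k) ω * (X (2 * k + 1) ω)ᴴ).prod) ∂μ =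
      Matrix.trace ((R * Rᴴ) ^ n) := by
  classical
  set P : ℕ → Ω → Matrix p p ℂ := fun m ω =>
    ((List.range m).map fun k => X (2 * k) ω * (X (2 * k + 1) ω)ᴴ).prod with hP
  -- facts about the pair products Z m = X (2m) * (X (2m+1))ᴴ
  have hpairindep : ∀ m, m < n →
      IndepFun (X (2 * m)) (X (2 * m + 1)) μ := by
    intro m hm
    have h1 : (2 * m : ℕ) < 2 * n := by omega
    have h2 : (2 * m + 1 : ℕ) < 2 * n := by omega
    have hne : (⟨2 * m, h1⟩ : Fin (2 * n)) ≠ ⟨2 * m + 1, h2⟩ := by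
      simp [Fin.ext_iff]
    exact hindep.indepFun hne
  have htermindep : ∀ m, m < n → ∀ (l j : p) (c : q),
      IndepFun (fun ω => X (2 * m) ω l c) (fun ω => conj (X (2 * m + 1) ω j c)) μ := by
    intro m hm l j c
    exact (hpairindep m hm).comp (measurable_matrix_entry l c)
      ((RCLike.continuous_conj (K := ℂ)).measurable.comp (measurable_matrix_entry j c))
  have hZint : ∀ m, m < n → ∀ (l j : p),
      Integrable (fun ω => (X (2 * m) ω * (X (2 * m + 1) ω)ᴴ) l j) μ := by
    intro m hm l j
    have : (fun ω => (X (2 * m) ω * (X (2 * m + 1) ω)ᴴ) l j)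
        = fun ω => ∑ c, X (2 * m) ω l c * conj (X (2 * m + 1) ω j c) := by
      funext ω
      simp [Matrix.mul_apply, Matrix.conjTranspose_apply]
    rw [this]
    refine integrable_finset_sum _ fun c _ => ?_
    exact (htermindep m hm l j c).integrable_mul
      (hint (2 * m) (by omega) l c)
      (integrable_conj_of_integrable (hint (2 * m + 1) (by omega) j c))
  have hZexp : ∀ m, m < n → ∀ (l j : p),
      ∫ ω, (X (2 * m) ω * (X (2 * m + 1) ω)ᴴ) l j ∂μ = (R * Rᴴ) l j := by
    intro m hm l j
    have hrw : (fun ω => (X (2 * m) ω * (X (2 * m + 1) ω)ᴴ) l j)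
        = fun ω => ∑ c, X (2 * m) ω l c * conj (X (2 * m + 1) ω j c) := by
      funext ω
      simp [Matrix.mul_apply, Matrix.conjTranspose_apply]
    have hti : ∀ c : q,
        Integrable (fun ω => X (2 * m) ω l c * conj (X (2 * m + 1) ω j c)) μ := fun c =>
      (htermindep m hm l j c).integrable_mul (hint (2 * m) (by omega) l c)
        (integrable_conj_of_integrable (hint (2 * m + 1) (by omega) j c))
    rw [hrw, integral_finset_sum _ fun c _ => hti c]
    have : ∀ c : q, ∫ ω, X (2 * m) ω l c * conj (X (2 * m + 1) ω j c) ∂μ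
        = R l c * conj (R j c) := by
      intro c
      rw [indep_integral_mul_complex (htermindep m hm l j c)
        (hint (2 * m) (by omega) l c)
        (integrable_conj_of_integrable (hint (2 * m + 1) (by omega) j c)),
        hexp (2 * m) (by omega) l c, integral_conj, hexp (2 * m + 1) (by omega) j c]
    simp_rw [this]
    simp [Matrix.mul_apply, Matrix.conjTranspose_apply]
  -- the key independence between prefix products and the next pair product
  have hindE : ∀ m, m < n → ∀ (i l j : p),
      IndepFun (fun ω => P m ω i l)
        (fun ω => (X (2 * m) ω * (X (2 * m + 1) ω)ᴴ) l j) μ := by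
    intro m hm i l j
    set S : Finset (Fin (2 * n)) := Finset.univ.filter fun t => (t : ℕ) < 2 * m with hS
    have h1 : (2 * m : ℕ) < 2 * n := by omega
    have h2 : (2 * m + 1 : ℕ) < 2 * n := by omega
    set T : Finset (Fin (2 * n)) := {⟨2 * m, h1⟩, ⟨2 * m + 1, h2⟩} with hT
    have hST : Disjoint S T := by
      rw [Finset.disjoint_left]
      intro t htS htT
      simp only [hS, Finset.mem_filter, Finset.mem_univ, true_and] at htS
      simp only [hT, Finset.mem_insert, Finset.mem_singleton, Fin.ext_iff] at htT
      omega
    have base := hindep.indepFun_finset S T hST (fun t => hmeas t)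
    -- extension of a tuple indexed by S to all of ℕ
    set ext : (S → Matrix p q ℂ) → ℕ → Matrix p q ℂ := fun v t =>
      if h : t < 2 * m then v ⟨⟨t, by omega⟩,
        by simp only [hS, Finset.mem_filter, Finset.mem_univ, true_and]; exact h⟩ else 0
      with hext
    have hextmeas : ∀ (t : ℕ) (a : p) (b : q),
        Measurable fun v : S → Matrix p q ℂ => ext v t a b := by
      intro t a b
      by_cases h : t < 2 * m
      · simp only [hext, dif_pos h]
        exact (measurable_matrix_entry a b).comp (measurable_pi_apply _)
      · simp only [hext, dif_neg h]
        exact measurable_const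
    set F : (S → Matrix p q ℂ) → ℂ := fun v =>
      (((List.range m).map fun k => ext v (2 * k) * (ext v (2 * k + 1))ᴴ).prod) i l with hF
    set G : (T → Matrix p q ℂ) → ℂ := fun w =>
      (w ⟨⟨2 * m, h1⟩, by rw [hT]; exact Finset.mem_insert_self _ _⟩ *
        (w ⟨⟨2 * m + 1, h2⟩,
          by rw [hT]; exact Finset.mem_insert_of_mem (Finset.mem_singleton_self _)⟩)ᴴ) l j
      with hG
    have hFmeas : Measurable F := by
      have hFeq : F = fun v =>
          ((((List.range m).map fun k => fun v : S → Matrix p q ℂ =>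
            ext v (2 * k) * (ext v (2 * k + 1))ᴴ).map fun
              (Gf : (S → Matrix p q ℂ) → Matrix p p ℂ) => Gf v).prod) i l := by
        funext v
        simp only [List.map_map]
        rfl
      rw [hFeq]
      refine measurable_list_prod_entry _ ?_ i l
      intro Fn hFn a b
      obtain ⟨k, hk, rfl⟩ := List.mem_map.mp hFn
      simp only [Matrix.mul_apply, Matrix.conjTranspose_apply]
      apply Finset.measurable_sum
      intro c _
      exact (hextmeas (2 * k) a c).mul
        ((RCLike.continuous_conj (K := ℂ)).measurable.comp (hextmeas (2 * k + 1) b c))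
    have hGmeas : Measurable G := by
      simp only [hG, Matrix.mul_apply, Matrix.conjTranspose_apply]
      apply Finset.measurable_sum
      intro c _
      exact ((measurable_matrix_entry l c).comp (measurable_pi_apply _)).mul
        ((RCLike.continuous_conj (K := ℂ)).measurable.comp
          ((measurable_matrix_entry j c).comp (measurable_pi_apply _)))
    have base2 := base.comp hFmeas hGmeas
    have hFX : (F ∘ fun ω (t : S) => X ((t : Fin (2 * n)) : ℕ) ω)
        = fun ω => P m ω i l := by
      funext ω
      simp only [Function.comp_apply, hF, hP]
      have hlist : (List.range m).map
            (fun k => ext (fun t : S => X ((t : Fin (2 * n)) : ℕ) ω) (2 * k) *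
              (ext (fun t : S => X ((t : Fin (2 * n)) : ℕ) ω) (2 * k + 1))ᴴ)
          = (List.range m).map fun k => X (2 * k) ω * (X (2 * k + 1) ω)ᴴ := by
        apply List.map_congr_left
        intro k hk
        rw [List.mem_range] at hk
        have hk1 : 2 * k < 2 * m := by omega
        have hk2 : 2 * k + 1 < 2 * m := by omega
        simp only [hext, dif_pos hk1, dif_pos hk2]
      rw [hlist]
    have hGX : (G ∘ fun ω (t : T) => X ((t : Fin (2 * n)) : ℕ) ω)
        = fun ω => (X (2 * m) ω * (X (2 * m + 1) ω)ᴴ) l j := by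
      funext ω
      rfl
    rw [← hFX, ← hGX]
    exact base2
  -- main induction
  have key : ∀ m, m ≤ n →
      (∀ i j : p, Integrable (fun ω => P m ω i j) μ) ∧
      (∀ i j : p, ∫ ω, P m ω i j ∂μ = ((R * Rᴴ) ^ m) i j) := by
    intro m
    induction m with
    | zero =>
      intro _
      constructor
      · intro i j
        have : (fun ω => P 0 ω i j) = fun _ => (1 : Matrix p p ℂ) i j := by
          funext ω; simp [hP]
        rw [this]
        exact integrable_const _
      · intro i j
        have : (fun ω => P 0 ω i j) = fun _ => (1 : Matrix p p ℂ) i j := by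
          funext ω; simp [hP]
        rw [this]
        simp
    | succ m ih =>
      intro hm1
      have hmn : m < n := by omega
      obtain ⟨ihint, ihexp⟩ := ih (by omega)
      have hsplit : ∀ ω, P (m + 1) ω = P m ω * (X (2 * m) ω * (X (2 * m + 1) ω)ᴴ) := by
        intro ω
        simp [hP, List.range_succ]
      have htermint : ∀ i l j : p,
          Integrable (fun ω => P m ω i l * (X (2 * m) ω * (X (2 * m + 1) ω)ᴴ) l j) μ :=
        fun i l j => (hindE m hmn i l j).integrable_mul (ihint i l) (hZint m hmn l j)
      have hentry : ∀ i j : p, (fun ω => P (m + 1) ω i j)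
          = fun ω => ∑ l, P m ω i l * (X (2 * m) ω * (X (2 * m + 1) ω)ᴴ) l j := by
        intro i j
        funext ω
        rw [hsplit ω, Matrix.mul_apply]
      constructor
      · intro i j
        rw [hentry i j]
        exact integrable_finset_sum _ fun l _ => htermint i l j
      · intro i j
        rw [hentry i j, integral_finset_sum _ fun l _ => htermint i l j]
        have : ∀ l : p, ∫ ω, P m ω i l * (X (2 * m) ω * (X (2 * m + 1) ω)ᴴ) l j ∂μ
            = ((R * Rᴴ) ^ m) i l * (R * Rᴴ) l j := by
          intro l
          rw [indep_integral_mul_complex (hindE m hmn i l j) (ihint i l) (hZint m hmn l j),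
            ihexp i l, hZexp m hmn l j]
        simp_rw [this]
        rw [pow_succ, Matrix.mul_apply]
  obtain ⟨hintN, hexpN⟩ := key n le_rfl
  have htr : (fun ω => Matrix.trace
      (((List.range n).map fun k => X (2 * k) ω * (X (2 * k + 1) ω)ᴴ).prod))
      = fun ω => ∑ i, P n ω i i := by
    funext ω
    simp [hP, Matrix.trace, Matrix.diag]
  rw [htr, integral_finset_sum _ fun i _ => hintN i i]
  simp_rw [hexpN]
  simp [Matrix.trace, Matrix.diag]
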